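/- arXiv:2108.07078 — 3 statements merged into one kernel-verified Lean document; each statement's English description precedes it below -/
import Mathlib

section
/- For each n ≥ 2 let c_n, d_n > 0 with c_n, d_n = o(log n), p_n = c_n/n ∈ (0,1), q_n = d_n/n ∈ (0,1), let the prior on Θ_n be uniform, let θ_n ∈ Θ_n, and fix a ∈ (0, 1/2). If there is a constant C > 1 such that (√c_n − √d_n)² > 4C(1 − log(a)) for all sufficiently large n, then P_{θ_n} Π(B_n(θ_n, ⌈a·n⌉) | X^n) → 1, i.e. the posterior recovers the true community assignment almost-exactly with error rate k_n = ⌈a·n⌉. -/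
open Finset Real Filter

/-- The set of potential edges of an `n`-vertex graph: pairs `(i,j)` with `i < j`. -/
abbrev Edge (n : ℕ) := {e : Fin n × Fin n // e.1 < e.2}

/-- An observed graph: an edge indicator for each potential edge. -/
abbrev ObsGraph (n : ℕ) := Edge n → Bool

/-- Edge probability under assignment `θ`: `p` within communities, `q` between. -/
noncomputable def edgeProb {n : ℕ} (p q : ℝ) (θ : Fin n → Bool) (e : Edge n) : ℝ :=
  if θ e.val.1 = θ e.val.2 then p else q

/-- Probability mass function of the observed graph under `θ`. -/
noncomputable def graphPMF {n : ℕ} (p q : ℝ) (θ : Fin n → Bool) (x : ObsGraph n) : ℝ :=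
  ∏ e : Edge n, if x e then edgeProb p q θ e else 1 - edgeProb p q θ e

/-- Hellinger affinity of Bernoulli parameters. -/
noncomputable def rho (p q : ℝ) : ℝ := Real.sqrt (p * q) + Real.sqrt ((1 - p) * (1 - q))

/-- Edges whose probability changes from `p` to `q` when replacing `θ` by `η`. -/
def D1 {n : ℕ} (θ η : Fin n → Bool) : Finset (Fin n × Fin n) :=
  Finset.univ.filter fun e => e.1 < e.2 ∧ θ e.1 = θ e.2 ∧ η e.1 ≠ η e.2

/-- Edges whose probability changes from `q` to `p` when replacing `θ` by `η`. -/
def D2 {n : ℕ} (θ η : Fin n → Bool) : Finset (Fin n × Fin n) :=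
  Finset.univ.filter fun e => e.1 < e.2 ∧ θ e.1 ≠ θ e.2 ∧ η e.1 = η e.2

/-- Hamming distance. -/
def hdist {n : ℕ} (θ η : Fin n → Bool) : ℕ := (Finset.univ.filter fun i => θ i ≠ η i).card

/-- The metric `k(θ,η) = h(θ,η) ∧ (n - h(θ,η))`. -/
def kdist {n : ℕ} (θ η : Fin n → Bool) : ℕ := min (hdist θ η) (n - hdist θ η)

/-- Size of the smallest community. -/
def countOnes {n : ℕ} (θ : Fin n → Bool) : ℕ := (Finset.univ.filter fun i => θ i = true).card

/-- The parameter space `Θ_n`. -/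
def Theta (n : ℕ) : Finset (Fin n → Bool) :=
  Finset.univ.filter fun θ => 2 * countOnes θ ≤ n ∧
    ∀ i : Fin n, 2 * countOnes θ = n → (i : ℕ) = 0 → θ i = false

/-- Posterior mass of `A ⊆ Θ_n` given data `x`, under prior mass function `π`. -/
noncomputable def postMass {n : ℕ} (p q : ℝ) (pri : (Fin n → Bool) → ℝ)
    (A : Finset (Fin n → Bool)) (x : ObsGraph n) : ℝ :=
  (∑ η ∈ A, pri η * graphPMF p q η x) / (∑ η ∈ Theta n, pri η * graphPMF p q η x)

/-- `P_θ`-expectation of the posterior mass of `A`. -/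
noncomputable def expPostMass {n : ℕ} (p q : ℝ) (pri : (Fin n → Bool) → ℝ)
    (θ : Fin n → Bool) (A : Finset (Fin n → Bool)) : ℝ :=
  ∑ x : ObsGraph n, graphPMF p q θ x * postMass p q pri A x

/-- The uniform prior on `Θ_n`. -/
noncomputable def unifPrior (n : ℕ) : (Fin n → Bool) → ℝ := fun _ => ((2:ℝ) ^ (n - 1))⁻¹

/-- Hamming ball `B_n(θ,k)` inside `Θ_n`. -/
def hball {n : ℕ} (θ : Fin n → Bool) (k : ℕ) : Finset (Fin n → Bool) :=
  (Theta n).filter fun η => kdist η θ ≤ k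

-- ===== auxiliary lemmas =====

lemma edgeProb_mem {n : ℕ} {p q : ℝ} (hp : p ∈ Set.Ioo (0:ℝ) 1) (hq : q ∈ Set.Ioo (0:ℝ) 1)
    (θ : Fin n → Bool) (e : Edge n) : edgeProb p q θ e ∈ Set.Ioo (0:ℝ) 1 := by
  unfold edgeProb; split <;> assumption

lemma factor_pos {n : ℕ} {p q : ℝ} (hp : p ∈ Set.Ioo (0:ℝ) 1) (hq : q ∈ Set.Ioo (0:ℝ) 1)
    (θ : Fin n → Bool) (e : Edge n) (b : Bool) :
    0 < (if b then edgeProb p q θ e else 1 - edgeProb p q θ e) := by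
  obtain ⟨h1, h2⟩ := edgeProb_mem hp hq θ e
  cases b
  · simpa using by linarith
  · simpa using h1

lemma graphPMF_pos {n : ℕ} {p q : ℝ} (hp : p ∈ Set.Ioo (0:ℝ) 1) (hq : q ∈ Set.Ioo (0:ℝ) 1)
    (θ : Fin n → Bool) (x : ObsGraph n) : 0 < graphPMF p q θ x :=
  Finset.prod_pos fun e _ => factor_pos hp hq θ e (x e)

lemma sum_prod_eq {n : ℕ} (f : Edge n → Bool → ℝ) :
    ∑ x : ObsGraph n, ∏ e : Edge n, f e (x e) = ∏ e : Edge n, (f e true + f e false) := by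
  rw [← Fintype.prod_sum f]
  exact Finset.prod_congr rfl fun e _ => (Fintype.sum_bool _)

lemma sum_graphPMF {n : ℕ} {p q : ℝ} (hp : p ∈ Set.Ioo (0:ℝ) 1) (hq : q ∈ Set.Ioo (0:ℝ) 1)
    (θ : Fin n → Bool) : ∑ x : ObsGraph n, graphPMF p q θ x = 1 := by
  have h : ∑ x : ObsGraph n, graphPMF p q θ x
      = ∏ e : Edge n, ((if true then edgeProb p q θ e else 1 - edgeProb p q θ e)
          + (if false then edgeProb p q θ e else 1 - edgeProb p q θ e)) :=
    sum_prod_eq (fun e b => if b then edgeProb p q θ e else 1 - edgeProb p q θ e)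
  rw [h]
  refine Finset.prod_eq_one fun e _ => ?_
  norm_num

lemma sqrtProd {ι : Type*} (s : Finset ι) (f : ι → ℝ) (h : ∀ i ∈ s, 0 ≤ f i) :
    Real.sqrt (∏ i ∈ s, f i) = ∏ i ∈ s, Real.sqrt (f i) := by
  induction s using Finset.cons_induction with
  | empty => simp
  | cons a s ha ih =>
    rw [Finset.prod_cons, Finset.prod_cons, Real.sqrt_mul (h a (Finset.mem_cons_self a s)),
      ih (fun i hi => h i (Finset.mem_cons.2 (Or.inr hi)))]

lemma hellinger {n : ℕ} {p q : ℝ} (hp : p ∈ Set.Ioo (0:ℝ) 1) (hq : q ∈ Set.Ioo (0:ℝ) 1)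
    (θ η : Fin n → Bool) :
    ∑ x : ObsGraph n, Real.sqrt (graphPMF p q θ x * graphPMF p q η x)
      = rho p q ^ (Finset.univ.filter (fun e : Edge n =>
          ¬(θ e.val.1 = θ e.val.2 ↔ η e.val.1 = η e.val.2))).card := by
  have key : ∀ x : ObsGraph n, Real.sqrt (graphPMF p q θ x * graphPMF p q η x)
      = ∏ e : Edge n,
          (fun (e : Edge n) (b : Bool) => Real.sqrt
            ((if b then edgeProb p q θ e else 1 - edgeProb p q θ e) *
             (if b then edgeProb p q η e else 1 - edgeProb p q η e))) e (x e) := by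
    intro x
    show Real.sqrt _ = ∏ e : Edge n, Real.sqrt _
    rw [graphPMF, graphPMF, ← Finset.prod_mul_distrib]
    exact sqrtProd _ _ fun e _ =>
      mul_nonneg (factor_pos hp hq θ e (x e)).le (factor_pos hp hq η e (x e)).le
  rw [Finset.sum_congr rfl fun x _ => key x,
    sum_prod_eq (fun (e : Edge n) (b : Bool) => Real.sqrt
      ((if b then edgeProb p q θ e else 1 - edgeProb p q θ e) *
       (if b then edgeProb p q η e else 1 - edgeProb p q η e)))]
  have hfac : ∀ e : Edge n,
      (Real.sqrt ((if true then edgeProb p q θ e else 1 - edgeProb p q θ e) *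
          (if true then edgeProb p q η e else 1 - edgeProb p q η e))
        + Real.sqrt ((if false then edgeProb p q θ e else 1 - edgeProb p q θ e) *
          (if false then edgeProb p q η e else 1 - edgeProb p q η e)))
      = if ¬(θ e.val.1 = θ e.val.2 ↔ η e.val.1 = η e.val.2) then rho p q else 1 := by
    intro e
    have e1 : (0:ℝ) ≤ 1 - p := by linarith [hp.2]
    have e2 : (0:ℝ) ≤ 1 - q := by linarith [hq.2]
    show Real.sqrt (edgeProb p q θ e * edgeProb p q η e)
        + Real.sqrt ((1 - edgeProb p q θ e) * (1 - edgeProb p q η e)) = _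
    rw [edgeProb, edgeProb]
    by_cases h1 : θ e.val.1 = θ e.val.2 <;> by_cases h2 : η e.val.1 = η e.val.2
    · rw [if_pos h1, if_pos h2, if_neg (not_not_intro (iff_of_true h1 h2)),
        Real.sqrt_mul_self hp.1.le, Real.sqrt_mul_self e1]; ring
    · rw [if_pos h1, if_neg h2, if_pos (fun hiff => h2 (hiff.mp h1))]; rfl
    · rw [if_neg h1, if_pos h2, if_pos (fun hiff => h1 (hiff.mpr h2)), rho,
        mul_comm q p, mul_comm (1-q) (1-p)]
    · rw [if_neg h1, if_neg h2, if_neg (not_not_intro (iff_of_false h1 h2)),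
        Real.sqrt_mul_self hq.1.le, Real.sqrt_mul_self e2]; ring
  rw [Finset.prod_congr rfl fun e _ => hfac e, Finset.prod_ite, Finset.prod_const,
    Finset.prod_const_one, mul_one]

lemma unifPrior_pos (n : ℕ) (ξ : Fin n → Bool) : 0 < unifPrior n ξ := by
  rw [unifPrior]; positivity

lemma sqrt_mul_le_max {u v : ℝ} (hu : 0 ≤ u) (hv : 0 ≤ v) : Real.sqrt (u * v) ≤ max u v := by
  have hm : 0 ≤ max u v := le_trans hu (le_max_left u v)
  have : u * v ≤ max u v * max u v :=
    mul_le_mul (le_max_left u v) (le_max_right u v) hv hm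
  calc Real.sqrt (u * v) ≤ Real.sqrt (max u v * max u v) := Real.sqrt_le_sqrt this
    _ = max u v := Real.sqrt_mul_self hm

lemma denom_ge {n : ℕ} {p q : ℝ} (hp : p ∈ Set.Ioo (0:ℝ) 1) (hq : q ∈ Set.Ioo (0:ℝ) 1)
    {θ η : Fin n → Bool} (hθ : θ ∈ Theta n) (hη : η ∈ Theta n) (x : ObsGraph n) :
    unifPrior n θ * Real.sqrt (graphPMF p q θ x * graphPMF p q η x)
      ≤ ∑ ξ ∈ Theta n, unifPrior n ξ * graphPMF p q ξ x := by
  have hnn : ∀ ξ ∈ Theta n, 0 ≤ unifPrior n ξ * graphPMF p q ξ x := fun ξ _ =>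
    mul_nonneg (unifPrior_pos n ξ).le (graphPMF_pos hp hq ξ x).le
  have h1 : unifPrior n θ * graphPMF p q θ x ≤ ∑ ξ ∈ Theta n, unifPrior n ξ * graphPMF p q ξ x :=
    Finset.single_le_sum hnn hθ
  have h2 : unifPrior n θ * graphPMF p q η x ≤ ∑ ξ ∈ Theta n, unifPrior n ξ * graphPMF p q ξ x := by
    have := Finset.single_le_sum hnn hη
    simpa [unifPrior] using this
  have hs := sqrt_mul_le_max (graphPMF_pos hp hq θ x).le (graphPMF_pos hp hq η x).le
  have := mul_le_mul_of_nonneg_left hs (unifPrior_pos n θ).le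
  refine le_trans this ?_
  rcases max_cases (graphPMF p q θ x) (graphPMF p q η x) with ⟨hmax, _⟩ | ⟨hmax, _⟩ <;>
    rw [hmax]
  · exact h1
  · exact h2

lemma expPost_le_hellinger {n : ℕ} {p q : ℝ} (hp : p ∈ Set.Ioo (0:ℝ) 1)
    (hq : q ∈ Set.Ioo (0:ℝ) 1) {θ : Fin n → Bool} (hθ : θ ∈ Theta n)
    {A : Finset (Fin n → Bool)} (hA : A ⊆ Theta n) :
    expPostMass p q (unifPrior n) θ A
      ≤ ∑ η ∈ A, rho p q ^ (Finset.univ.filter (fun e : Edge n =>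
          ¬(θ e.val.1 = θ e.val.2 ↔ η e.val.1 = η e.val.2))).card := by
  have step1 : expPostMass p q (unifPrior n) θ A
      ≤ ∑ x : ObsGraph n, ∑ η ∈ A, Real.sqrt (graphPMF p q θ x * graphPMF p q η x) := by
    rw [expPostMass]
    refine Finset.sum_le_sum fun x _ => ?_
    rw [postMass, Finset.sum_div, Finset.mul_sum]
    refine Finset.sum_le_sum fun η hη => ?_
    set u := graphPMF p q θ x with hu
    set v := graphPMF p q η x with hv
    have hu0 : 0 < u := graphPMF_pos hp hq θ x
    have hv0 : 0 < v := graphPMF_pos hp hq η x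
    have hsq : 0 < Real.sqrt (u * v) := Real.sqrt_pos.2 (mul_pos hu0 hv0)
    have hw : 0 < unifPrior n θ := unifPrior_pos n θ
    have hD : unifPrior n θ * Real.sqrt (u * v)
        ≤ ∑ ξ ∈ Theta n, unifPrior n ξ * graphPMF p q ξ x := denom_ge hp hq hθ (hA hη) x
    have hweq : unifPrior n η = unifPrior n θ := rfl
    calc u * (unifPrior n η * v / ∑ ξ ∈ Theta n, unifPrior n ξ * graphPMF p q ξ x)
        ≤ u * (unifPrior n η * v / (unifPrior n θ * Real.sqrt (u * v))) := by
          gcongr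
      _ = Real.sqrt (u * v) := by
          rw [hweq, mul_div_mul_left _ _ hw.ne', ← mul_div_assoc, Real.div_sqrt]
  refine le_trans step1 ?_
  rw [Finset.sum_comm]
  exact le_of_eq (Finset.sum_congr rfl fun η _ => hellinger hp hq θ η)

lemma postMass_nonneg {n : ℕ} {p q : ℝ} (hp : p ∈ Set.Ioo (0:ℝ) 1) (hq : q ∈ Set.Ioo (0:ℝ) 1)
    (A : Finset (Fin n → Bool)) (x : ObsGraph n) : 0 ≤ postMass p q (unifPrior n) A x := by
  rw [postMass]
  refine div_nonneg (Finset.sum_nonneg fun η _ => ?_) (Finset.sum_nonneg fun η _ => ?_) <;>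
    exact mul_nonneg (unifPrior_pos n η).le (graphPMF_pos hp hq η x).le

lemma expPost_split {n : ℕ} {p q : ℝ} (hp : p ∈ Set.Ioo (0:ℝ) 1) (hq : q ∈ Set.Ioo (0:ℝ) 1)
    {θ : Fin n → Bool} (hθ : θ ∈ Theta n) (k0 : ℕ) :
    expPostMass p q (unifPrior n) θ (hball θ k0)
      = 1 - expPostMass p q (unifPrior n) θ (Theta n \ hball θ k0) := by
  have hDpos : ∀ x : ObsGraph n, 0 < ∑ ξ ∈ Theta n, unifPrior n ξ * graphPMF p q ξ x := fun x =>
    Finset.sum_pos' (fun ξ _ => mul_nonneg (unifPrior_pos n ξ).le (graphPMF_pos hp hq ξ x).le)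
      ⟨θ, hθ, mul_pos (unifPrior_pos n θ) (graphPMF_pos hp hq θ x)⟩
  have hpost : ∀ x : ObsGraph n, postMass p q (unifPrior n) (hball θ k0) x
      = 1 - postMass p q (unifPrior n) (Theta n \ hball θ k0) x := by
    intro x
    rw [postMass, postMass, eq_sub_iff_add_eq, ← add_div]
    rw [add_comm, Finset.sum_sdiff (show hball θ k0 ⊆ Theta n from Finset.filter_subset _ _)]
    exact div_self (hDpos x).ne'
  rw [expPostMass, expPostMass]
  calc ∑ x : ObsGraph n, graphPMF p q θ x * postMass p q (unifPrior n) (hball θ k0) x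
      = ∑ x : ObsGraph n, (graphPMF p q θ x
          - graphPMF p q θ x * postMass p q (unifPrior n) (Theta n \ hball θ k0) x) := by
        refine Finset.sum_congr rfl fun x _ => ?_
        rw [hpost x]; ring
    _ = 1 - ∑ x : ObsGraph n, graphPMF p q θ x * postMass p q (unifPrior n) (Theta n \ hball θ k0) x := by
        rw [Finset.sum_sub_distrib, sum_graphPMF hp hq θ]

lemma bool_xor (A B C D : Bool) : (¬(A = B ↔ C = D)) ↔ ((A ≠ C) ↔ (B = D)) := by
  revert A B C D; decide

lemma hdist_comm {n : ℕ} (θ η : Fin n → Bool) : hdist θ η = hdist η θ := by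
  unfold hdist; congr 1; ext i; simp [ne_comm]

lemma hdist_le {n : ℕ} (θ η : Fin n → Bool) : hdist θ η ≤ n := by
  calc hdist θ η ≤ (Finset.univ : Finset (Fin n)).card := Finset.card_filter_le _ _
    _ = n := by simp

lemma edge_count {n : ℕ} (θ η : Fin n → Bool) :
    (Finset.univ.filter (fun e : Edge n =>
        ¬(θ e.val.1 = θ e.val.2 ↔ η e.val.1 = η e.val.2))).card
      = hdist θ η * (n - hdist θ η) := by
  classical
  have hcardc : (Finset.univ.filter (fun i : Fin n => θ i = η i)).card = n - hdist θ η := by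
    have h := Finset.card_filter_add_card_filter_not (s := (Finset.univ : Finset (Fin n)))
      (p := fun i => θ i ≠ η i)
    simp only [Finset.card_univ, Fintype.card_fin, not_not] at h
    unfold hdist
    omega
  have h0 : (Finset.univ.filter (fun e : Edge n =>
      ¬(θ e.val.1 = θ e.val.2 ↔ η e.val.1 = η e.val.2))).card
      = (Finset.univ.filter (fun p : Fin n × Fin n =>
          p.1 < p.2 ∧ ¬(θ p.1 = θ p.2 ↔ η p.1 = η p.2))).card := by
    refine Finset.card_nbij (fun e => e.val) (fun e he => ?_) (fun e₁ h₁ e₂ h₂ h => ?_) ?_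
    · simp only [Finset.mem_coe, Finset.mem_filter, Finset.mem_univ, true_and] at he ⊢
      exact ⟨e.prop, he⟩
    · exact Subtype.ext h
    · intro p hp
      simp only [Finset.coe_filter, Finset.mem_univ, true_and, Set.mem_setOf_eq] at hp
      exact ⟨⟨p, hp.1⟩, by simp [hp.2], rfl⟩
  have h1 : (Finset.univ.filter (fun p : Fin n × Fin n =>
      p.1 < p.2 ∧ ¬(θ p.1 = θ p.2 ↔ η p.1 = η p.2))).card
      = ((Finset.univ.filter (fun i : Fin n => θ i ≠ η i))
          ×ˢ (Finset.univ.filter (fun i : Fin n => θ i = η i))).card := by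
    refine Finset.card_nbij' (fun p => if θ p.1 = η p.1 then (p.2, p.1) else p)
      (fun p => if p.1 < p.2 then p else (p.2, p.1)) ?_ ?_ ?_ ?_
    · intro p hp
      simp only [Finset.mem_coe, Finset.mem_filter, Finset.mem_univ, true_and] at hp
      have hx := (bool_xor _ _ _ _).1 hp.2
      by_cases hc : θ p.1 = η p.1
      · have h2 : ¬ (θ p.2 = η p.2) := by tauto
        simp only [Finset.mem_coe, hc, if_true, ite_true, Finset.mem_product, Finset.mem_filter,
          Finset.mem_univ, true_and]
        exact ⟨h2, trivial⟩
      · have h2 : θ p.2 = η p.2 := by tauto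
        simp only [Finset.mem_coe, hc, if_false, ite_false, Finset.mem_product, Finset.mem_filter,
          Finset.mem_univ, true_and]
        exact ⟨hc, h2⟩
    · intro p hp
      simp only [Finset.mem_coe, Finset.mem_product, Finset.mem_filter, Finset.mem_univ, true_and] at hp
      have hne : p.1 ≠ p.2 := fun h => hp.1 (h ▸ hp.2)
      by_cases hlt : p.1 < p.2
      · simp only [Finset.mem_coe, hlt, if_true, ite_true, Finset.mem_filter, Finset.mem_univ, true_and]
        exact (bool_xor _ _ _ _).2 (by tauto)
      · have hlt2 : p.2 < p.1 := lt_of_le_of_ne (le_of_not_gt hlt) (Ne.symm hne)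
        simp only [Finset.mem_coe, hlt, if_false, ite_false, Finset.mem_filter, Finset.mem_univ, true_and]
        exact ⟨hlt2, (bool_xor _ _ _ _).2 (by tauto)⟩
    · intro p hp
      simp only [Finset.mem_coe, Finset.mem_filter, Finset.mem_univ, true_and] at hp
      by_cases hc : θ p.1 = η p.1
      · have : ¬ (p.2 < p.1) := not_lt_of_gt hp.1
        simp only [hc, this, if_true, if_false, ite_true, ite_false]
      · simp only [hc, hp.1, if_true, if_false, ite_true, ite_false]
    · intro p hp
      simp only [Finset.mem_coe, Finset.mem_product, Finset.mem_filter, Finset.mem_univ, true_and] at hp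
      by_cases hlt : p.1 < p.2
      · simp only [hlt, hp.1, if_true, if_false, ite_true, ite_false]
      · simp only [hlt, hp.2, if_true, if_false, ite_true, ite_false]
  rw [h0, h1, Finset.card_product, hcardc]
  rfl

lemma card_hdist_eq {n : ℕ} (θ : Fin n → Bool) (h : ℕ) :
    (Finset.univ.filter (fun η : Fin n → Bool => hdist θ η = h)).card = n.choose h := by
  classical
  have key : (Finset.univ.filter (fun η : Fin n → Bool => hdist θ η = h)).card
      = (Finset.powersetCard h (Finset.univ : Finset (Fin n))).card := by
    refine Finset.card_nbij' (fun η => Finset.univ.filter (fun i => θ i ≠ η i))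
      (fun S => fun i => if i ∈ S then !(θ i) else θ i) ?_ ?_ ?_ ?_
    · intro η hη
      simp only [Finset.mem_coe, Finset.mem_filter, Finset.mem_univ, true_and] at hη
      rw [Finset.mem_coe, Finset.mem_powersetCard]
      exact ⟨Finset.subset_univ _, hη⟩
    · intro S hS
      rw [Finset.mem_coe, Finset.mem_powersetCard] at hS
      simp only [Finset.mem_coe, Finset.mem_filter, Finset.mem_univ, true_and]
      have hfe : (Finset.univ.filter (fun i => θ i ≠ if i ∈ S then !(θ i) else θ i)) = S := by
        ext i
        simp only [Finset.mem_filter, Finset.mem_univ, true_and]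
        by_cases hi : i ∈ S
        · simp only [hi, if_true, ite_true, iff_true]
          cases θ i <;> simp
        · simp only [hi, if_false, ite_false, iff_false]
          simp
      rw [hdist, hfe, hS.2]
    · intro η hη
      funext i
      by_cases hi : θ i = η i
      · have : i ∉ Finset.univ.filter (fun j => θ j ≠ η j) := by simp [hi]
        simp only [this, if_false, ite_false]
        exact hi
      · have : i ∈ Finset.univ.filter (fun j => θ j ≠ η j) := by simp [hi]
        simp only [this, if_true, ite_true]
        cases hθ : θ i <;> cases hη2 : η i <;> simp_all
    · intro S hS
      ext i
      simp only [Finset.mem_filter, Finset.mem_univ, true_and]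
      by_cases hi : i ∈ S
      · simp only [hi, if_true, ite_true, iff_true]
        cases θ i <;> simp
      · simp only [hi, if_false, ite_false, iff_false]
        simp
  rw [key, Finset.card_powersetCard, Finset.card_univ, Fintype.card_fin]

lemma rho_nonneg (p q : ℝ) : 0 ≤ rho p q :=
  add_nonneg (Real.sqrt_nonneg _) (Real.sqrt_nonneg _)

lemma sqrt_mul_le_half_add {x y : ℝ} (hx : 0 ≤ x) (hy : 0 ≤ y) :
    Real.sqrt (x * y) ≤ (x + y) / 2 := by
  rw [show (x + y) / 2 = Real.sqrt (((x + y) / 2) ^ 2) from (Real.sqrt_sq (by positivity)).symm]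
  exact Real.sqrt_le_sqrt (by nlinarith [sq_nonneg (x - y)])

lemma rho_le_exp {p q : ℝ} (hp : p ∈ Set.Ioo (0:ℝ) 1) (hq : q ∈ Set.Ioo (0:ℝ) 1) :
    rho p q ≤ Real.exp (-((Real.sqrt p - Real.sqrt q) ^ 2 / 2)) := by
  have h1 : Real.sqrt ((1 - p) * (1 - q)) ≤ ((1 - p) + (1 - q)) / 2 :=
    sqrt_mul_le_half_add (by linarith [hp.2]) (by linarith [hq.2])
  have h2 : Real.sqrt (p * q) = Real.sqrt p * Real.sqrt q := Real.sqrt_mul hp.1.le q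
  have hsp : Real.sqrt p ^ 2 = p := Real.sq_sqrt hp.1.le
  have hsq : Real.sqrt q ^ 2 = q := Real.sq_sqrt hq.1.le
  have key : rho p q ≤ 1 - (Real.sqrt p - Real.sqrt q) ^ 2 / 2 := by
    rw [rho, h2]; nlinarith
  exact le_trans key (Real.one_sub_le_exp_neg _)

lemma choose_le_exp {n k : ℕ} {a : ℝ} (ha : 0 < a) (hk : 1 ≤ k) (hak : a * n ≤ k) :
    (n.choose k : ℝ) ≤ Real.exp ((1 - Real.log a) * k) := by
  have hkpos : (0:ℝ) < k := by exact_mod_cast hk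
  have hkf : (0:ℝ) < ((Nat.factorial k) : ℝ) := by exact_mod_cast k.factorial_pos
  have h1 : (n.choose k : ℝ) ≤ (n:ℝ) ^ k / ((Nat.factorial k) : ℝ) := Nat.choose_le_pow_div k n
  have h2 : (k:ℝ) ^ k / ((Nat.factorial k) : ℝ) ≤ Real.exp k := Real.pow_div_factorial_le_exp (x := (k:ℝ)) hkpos.le k
  have h3 : (n:ℝ) ^ k / ((Nat.factorial k) : ℝ) = ((n:ℝ) / k) ^ k * ((k:ℝ) ^ k / ((Nat.factorial k) : ℝ)) := by
    rw [div_pow]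
    field_simp
  have h4 : (n:ℝ) / k ≤ 1 / a := by
    rw [div_le_div_iff₀ hkpos ha]
    nlinarith
  have h5 : ((n:ℝ) / k) ^ k ≤ (1 / a) ^ k := pow_le_pow_left₀ (by positivity) h4 k
  have h6 : ((1:ℝ) / a) ^ k = Real.exp (-(Real.log a) * k) := by
    rw [mul_comm, Real.exp_nat_mul, ← Real.log_inv, Real.exp_log (by positivity), one_div]
  calc (n.choose k : ℝ) ≤ (n:ℝ) ^ k / ((Nat.factorial k) : ℝ) := h1
    _ = ((n:ℝ) / k) ^ k * ((k:ℝ) ^ k / ((Nat.factorial k) : ℝ)) := h3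
    _ ≤ (1 / a) ^ k * Real.exp k := mul_le_mul h5 h2 (by positivity) (by positivity)
    _ = Real.exp ((1 - Real.log a) * k) := by
        rw [h6, ← Real.exp_add]
        congr 1
        ring

lemma sum_T_le {n : ℕ} (hn : 2 ≤ n) {p q a C : ℝ}
    (hp : p ∈ Set.Ioo (0:ℝ) 1) (hq : q ∈ Set.Ioo (0:ℝ) 1)
    (ha : a ∈ Set.Ioo (0:ℝ) (1/2)) (hC : 1 < C)
    (hrho : rho p q ≤ Real.exp (-(2 * C * (1 - Real.log a)) / n))
    (θ : Fin n → Bool) :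
    ∑ η ∈ Theta n \ hball θ ⌈a * n⌉₊, rho p q ^ (hdist θ η * (n - hdist θ η))
      ≤ 2 * ((n:ℝ) + 1) * Real.exp (-((C - 1) * (1 - Real.log a) * a) * n) := by
  have hn0 : (0:ℝ) < n := by exact_mod_cast Nat.lt_of_lt_of_le (by norm_num) hn
  have hL : Real.log a < 0 := Real.log_neg ha.1 (by linarith [ha.2])
  have h1L : (0:ℝ) < 1 - Real.log a := by linarith
  have hCL : (0:ℝ) < C * (1 - Real.log a) := mul_pos (by linarith) h1L
  set k0 := ⌈a * n⌉₊ with hk0def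
  have hk0 : a * n ≤ k0 := Nat.le_ceil _
  have maps : ∀ η ∈ Theta n \ hball θ k0, kdist η θ ∈ Finset.Icc (k0+1) n := by
    intro η hη
    rw [Finset.mem_sdiff] at hη
    have h1 : ¬ (kdist η θ ≤ k0) := fun hle => hη.2 (Finset.mem_filter.2 ⟨hη.1, hle⟩)
    have h2 : kdist η θ ≤ n := le_trans (min_le_left _ _) (hdist_le η θ)
    rw [Finset.mem_Icc]; omega
  rw [← Finset.sum_fiberwise_of_maps_to maps (fun η => rho p q ^ (hdist θ η * (n - hdist θ η)))]
  have inner : ∀ k ∈ Finset.Icc (k0+1) n,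
      (∑ η ∈ (Theta n \ hball θ k0).filter (fun η => kdist η θ = k),
        rho p q ^ (hdist θ η * (n - hdist θ η)))
      ≤ 2 * Real.exp (-((C - 1) * (1 - Real.log a) * a) * n) := by
    intro k hk
    rw [Finset.mem_Icc] at hk
    have hk1 : 1 ≤ k := le_trans (Nat.le_add_left 1 k0) hk.1
    have hkan : a * n ≤ (k:ℝ) := le_trans hk0 (Nat.cast_le.2 (by omega))
    have hη_bound : ∀ η ∈ (Theta n \ hball θ k0).filter (fun η => kdist η θ = k),
        rho p q ^ (hdist θ η * (n - hdist θ η)) ≤ Real.exp (-(C * (1 - Real.log a)) * k) := by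
      intro η hη
      rw [Finset.mem_filter] at hη
      have hhn : hdist θ η ≤ n := hdist_le θ η
      have hkmin : k = min (hdist θ η) (n - hdist θ η) := by
        rw [← hη.2, kdist, hdist_comm η θ]
      have hm : k * n ≤ 2 * (hdist θ η * (n - hdist θ η)) := by
        rcases le_total (hdist θ η) (n - hdist θ η) with hle | hle
        · have hk_eq : k = hdist θ η := by omega
          have hineq : n ≤ 2 * (n - hdist θ η) := by omega
          calc k * n = hdist θ η * n := by rw [hk_eq]
            _ ≤ hdist θ η * (2 * (n - hdist θ η)) := Nat.mul_le_mul_left _ hineq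
            _ = 2 * (hdist θ η * (n - hdist θ η)) := by ring
        · have hk_eq : k = n - hdist θ η := by omega
          have hineq : n ≤ 2 * hdist θ η := by omega
          calc k * n = (n - hdist θ η) * n := by rw [hk_eq]
            _ ≤ (n - hdist θ η) * (2 * hdist θ η) := Nat.mul_le_mul_left _ hineq
            _ = 2 * (hdist θ η * (n - hdist θ η)) := by ring
      have hpow : rho p q ^ (hdist θ η * (n - hdist θ η))
          ≤ Real.exp (-(2 * C * (1 - Real.log a)) / n) ^ (hdist θ η * (n - hdist θ η)) :=
        pow_le_pow_left₀ (rho_nonneg p q) hrho _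
      have hexp : Real.exp (-(2 * C * (1 - Real.log a)) / n) ^ (hdist θ η * (n - hdist θ η))
          = Real.exp ((-(2 * C * (1 - Real.log a)) / n) * ((hdist θ η * (n - hdist θ η) : ℕ) : ℝ)) := by
        rw [← Real.exp_nat_mul, mul_comm ((hdist θ η * (n - hdist θ η) : ℕ) : ℝ)]
      have harg : (-(2 * C * (1 - Real.log a)) / n) * ((hdist θ η * (n - hdist θ η) : ℕ) : ℝ)
          ≤ -(C * (1 - Real.log a)) * k := by
        have hcast : (k:ℝ) * n ≤ 2 * ((hdist θ η * (n - hdist θ η) : ℕ) : ℝ) := by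
          exact_mod_cast hm
        rw [div_mul_eq_mul_div, neg_mul, neg_div, neg_mul, neg_le_neg_iff, le_div_iff₀ hn0]
        nlinarith [mul_le_mul_of_nonneg_left hcast hCL.le]
      calc rho p q ^ (hdist θ η * (n - hdist θ η))
          ≤ Real.exp (-(2 * C * (1 - Real.log a)) / n) ^ (hdist θ η * (n - hdist θ η)) := hpow
        _ = Real.exp ((-(2 * C * (1 - Real.log a)) / n) * ((hdist θ η * (n - hdist θ η) : ℕ) : ℝ)) := hexp
        _ ≤ Real.exp (-(C * (1 - Real.log a)) * k) := Real.exp_le_exp.2 harg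
    have hcard : ((Theta n \ hball θ k0).filter (fun η => kdist η θ = k)).card ≤ 2 * n.choose k := by
      have hsub : (Theta n \ hball θ k0).filter (fun η => kdist η θ = k)
          ⊆ (Finset.univ.filter (fun η : Fin n → Bool => hdist θ η = k))
            ∪ (Finset.univ.filter (fun η : Fin n → Bool => hdist θ η = n - k)) := by
        intro η hη
        rw [Finset.mem_filter] at hη
        have hhn : hdist θ η ≤ n := hdist_le θ η
        have hmin : kdist η θ = k := hη.2
        rw [kdist, hdist_comm η θ] at hmin
        rw [Finset.mem_union, Finset.mem_filter, Finset.mem_filter]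
        simp only [Finset.mem_univ, true_and]
        omega
      calc ((Theta n \ hball θ k0).filter (fun η => kdist η θ = k)).card
          ≤ _ := Finset.card_le_card hsub
        _ ≤ _ := Finset.card_union_le _ _
        _ = n.choose k + n.choose (n - k) := by rw [card_hdist_eq, card_hdist_eq]
        _ = 2 * n.choose k := by rw [Nat.choose_symm hk.2]; ring
    have hsum := Finset.sum_le_card_nsmul _ _ _ hη_bound
    have hchoose : (n.choose k : ℝ) ≤ Real.exp ((1 - Real.log a) * k) :=
      choose_le_exp ha.1 hk1 hkan
    calc (∑ η ∈ (Theta n \ hball θ k0).filter (fun η => kdist η θ = k),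
          rho p q ^ (hdist θ η * (n - hdist θ η)))
        ≤ ((Theta n \ hball θ k0).filter (fun η => kdist η θ = k)).card
            • Real.exp (-(C * (1 - Real.log a)) * k) := hsum
      _ = (((Theta n \ hball θ k0).filter (fun η => kdist η θ = k)).card : ℝ)
            * Real.exp (-(C * (1 - Real.log a)) * k) := nsmul_eq_mul _ _
      _ ≤ ((2 * n.choose k : ℕ) : ℝ) * Real.exp (-(C * (1 - Real.log a)) * k) := by
          exact mul_le_mul_of_nonneg_right (Nat.cast_le.2 hcard) (Real.exp_pos _).le
      _ ≤ (2 * Real.exp ((1 - Real.log a) * k)) * Real.exp (-(C * (1 - Real.log a)) * k) := by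
          push_cast
          exact mul_le_mul_of_nonneg_right (by linarith) (Real.exp_pos _).le
      _ = 2 * Real.exp (-((C - 1) * (1 - Real.log a)) * k) := by
          rw [mul_assoc, ← Real.exp_add]
          congr 1
          ring
      _ ≤ 2 * Real.exp (-((C - 1) * (1 - Real.log a) * a) * n) := by
          have hpos : (0:ℝ) < (C - 1) * (1 - Real.log a) := mul_pos (by linarith) h1L
          have hexp_le : -((C - 1) * (1 - Real.log a)) * k ≤ -((C - 1) * (1 - Real.log a) * a) * n := by
            nlinarith
          exact mul_le_mul_of_nonneg_left (Real.exp_le_exp.2 hexp_le) (by norm_num)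
  calc ∑ k ∈ Finset.Icc (k0+1) n,
        (∑ η ∈ (Theta n \ hball θ k0).filter (fun η => kdist η θ = k),
          rho p q ^ (hdist θ η * (n - hdist θ η)))
      ≤ ∑ k ∈ Finset.Icc (k0+1) n, 2 * Real.exp (-((C - 1) * (1 - Real.log a) * a) * n) :=
        Finset.sum_le_sum inner
    _ = ((Finset.Icc (k0+1) n).card : ℝ) * (2 * Real.exp (-((C - 1) * (1 - Real.log a) * a) * n)) := by
        rw [Finset.sum_const, nsmul_eq_mul]
    _ ≤ ((n:ℝ) + 1) * (2 * Real.exp (-((C - 1) * (1 - Real.log a) * a) * n)) := by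
        have hcard2 : (Finset.Icc (k0+1) n).card ≤ n + 1 := by
          rw [Nat.card_Icc]; omega
        refine mul_le_mul_of_nonneg_right ?_ (by positivity)
        exact_mod_cast hcard2
    _ = 2 * ((n:ℝ) + 1) * Real.exp (-((C - 1) * (1 - Real.log a) * a) * n) := by ring
/-- if `(√c_n − √d_n)² > 4C(1 − log a)` eventually, for some `C > 1`,
then the posterior recovers the true assignment almost-exactly with error rate `⌈a n⌉`. -/
theorem stmt12 (c d : ℕ → ℝ) (hc0 : ∀ n, 2 ≤ n → 0 < c n) (hd0 : ∀ n, 2 ≤ n → 0 < d n)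
    (hco : c =o[Filter.atTop] fun n : ℕ => Real.log n)
    (hdo : d =o[Filter.atTop] fun n : ℕ => Real.log n)
    (hp : ∀ n, 2 ≤ n → c n / n ∈ Set.Ioo (0:ℝ) 1)
    (hq : ∀ n, 2 ≤ n → d n / n ∈ Set.Ioo (0:ℝ) 1)
    (θ : (n : ℕ) → Fin n → Bool) (hθ : ∀ n, 2 ≤ n → θ n ∈ Theta n)
    (a : ℝ) (ha : a ∈ Set.Ioo (0:ℝ) (1/2))
    (hcond : ∃ C : ℝ, 1 < C ∧ ∀ᶠ n : ℕ in Filter.atTop,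
      4 * C * (1 - Real.log a) < (Real.sqrt (c n) - Real.sqrt (d n))^2) :
    Filter.Tendsto (fun n : ℕ =>
        expPostMass (c n / n) (d n / n) (unifPrior n) (θ n)
          (hball (θ n) ⌈a * n⌉₊))
      Filter.atTop (nhds 1) := by
  obtain ⟨C, hC, hev⟩ := hcond
  have ha0 := ha.1
  have ha2 := ha.2
  have hL : Real.log a < 0 := Real.log_neg ha0 (by linarith)
  have h1L : (0:ℝ) < 1 - Real.log a := by linarith
  set b : ℝ := (C - 1) * (1 - Real.log a) * a with hbdef
  have hbpos : 0 < b := mul_pos (mul_pos (by linarith) h1L) ha0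
  -- The error sequence
  set E : ℕ → ℝ := fun n => expPostMass (c n / n) (d n / n) (unifPrior n) (θ n)
    (Theta n \ hball (θ n) ⌈a * n⌉₊) with hEdef
  -- eventual properties
  have hsplit : ∀ᶠ n : ℕ in atTop, expPostMass (c n / n) (d n / n) (unifPrior n) (θ n)
      (hball (θ n) ⌈a * n⌉₊) = 1 - E n := by
    filter_upwards [eventually_ge_atTop 2] with n hn
    exact expPost_split (hp n hn) (hq n hn) (hθ n hn) _
  have hE0 : ∀ᶠ n : ℕ in atTop, 0 ≤ E n := by
    filter_upwards [eventually_ge_atTop 2] with n hn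
    rw [hEdef]
    exact Finset.sum_nonneg fun x _ => mul_nonneg (graphPMF_pos (hp n hn) (hq n hn) _ x).le
      (postMass_nonneg (hp n hn) (hq n hn) _ x)
  have hEle : ∀ᶠ n : ℕ in atTop,
      E n ≤ 2 * ((n:ℝ) + 1) * Real.exp (-b * n) := by
    filter_upwards [eventually_ge_atTop 2, hev] with n hn hevn
    have hn0 : (0:ℝ) < n := by exact_mod_cast Nat.lt_of_lt_of_le (by norm_num) hn
    -- rho bound
    have hrho : rho (c n / n) (d n / n) ≤ Real.exp (-(2 * C * (1 - Real.log a)) / n) := by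
      have h1 := rho_le_exp (hp n hn) (hq n hn)
      have hsq : (Real.sqrt (c n / n) - Real.sqrt (d n / n)) ^ 2
          = (Real.sqrt (c n) - Real.sqrt (d n)) ^ 2 / n := by
        rw [Real.sqrt_div (hc0 n hn).le, Real.sqrt_div (hd0 n hn).le, div_sub_div_same, div_pow,
          Real.sq_sqrt hn0.le]
      refine le_trans h1 (Real.exp_le_exp.2 ?_)
      rw [hsq]
      have key : (2 * C * (1 - Real.log a)) / (n:ℝ)
          ≤ (Real.sqrt (c n) - Real.sqrt (d n)) ^ 2 / n / 2 := by
        rw [div_div, div_le_div_iff₀ hn0 (by positivity)]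
        nlinarith
      rw [neg_div]
      exact neg_le_neg key
    have h2 := expPost_le_hellinger (hp n hn) (hq n hn) (hθ n hn)
      (Finset.sdiff_subset (s := Theta n) (t := hball (θ n) ⌈a * n⌉₊))
    have h3 : ∑ η ∈ Theta n \ hball (θ n) ⌈a * n⌉₊,
        rho (c n / n) (d n / n) ^ ((Finset.univ.filter (fun e : Edge n =>
          ¬(θ n e.val.1 = θ n e.val.2 ↔ η e.val.1 = η e.val.2))).card)
        = ∑ η ∈ Theta n \ hball (θ n) ⌈a * n⌉₊,
        rho (c n / n) (d n / n) ^ (hdist (θ n) η * (n - hdist (θ n) η)) :=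
      Finset.sum_congr rfl fun η _ => by rw [edge_count]
    have h4 := sum_T_le hn (hp n hn) (hq n hn) ha hC hrho (θ n)
    rw [hEdef]
    calc expPostMass (c n / n) (d n / n) (unifPrior n) (θ n) (Theta n \ hball (θ n) ⌈a * n⌉₊)
        ≤ _ := h2
      _ = _ := h3
      _ ≤ 2 * ((n:ℝ) + 1) * Real.exp (-((C - 1) * (1 - Real.log a) * a) * n) := h4
  -- the bound tends to zero
  have hbnd : Tendsto (fun n : ℕ => 2 * ((n:ℝ) + 1) * Real.exp (-b * n)) atTop (nhds 0) := by
    have h1 : Tendsto (fun n : ℕ => b * n) atTop atTop :=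
      Tendsto.const_mul_atTop hbpos tendsto_natCast_atTop_atTop
    have h2 : Tendsto (fun x : ℝ => x * Real.exp (-x)) atTop (nhds 0) := by
      simpa using tendsto_pow_mul_exp_neg_atTop_nhds_zero 1
    have h3 : Tendsto (fun n : ℕ => (b * n) * Real.exp (-(b * n))) atTop (nhds 0) := h2.comp h1
    have h4 : Tendsto (fun n : ℕ => Real.exp (-(b * n))) atTop (nhds 0) :=
      (Real.tendsto_exp_atBot.comp (tendsto_neg_atTop_atBot.comp h1))
    have heq : (fun n : ℕ => 2 * ((n:ℝ) + 1) * Real.exp (-b * n))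
        = fun n : ℕ => (2 / b) * ((b * n) * Real.exp (-(b * n))) + 2 * Real.exp (-(b * n)) := by
      funext n
      have : -b * n = -(b * n) := by ring
      rw [this]
      field_simp
    rw [heq]
    have := (h3.const_mul (2 / b)).add (h4.const_mul 2)
    simpa using this
  have hEzero : Tendsto E atTop (nhds 0) :=
    tendsto_of_tendsto_of_tendsto_of_le_of_le' tendsto_const_nhds hbnd hE0 hEle
  have hfinal : Tendsto (fun n : ℕ => 1 - E n) atTop (nhds 1) := by
    have := tendsto_const_nhds (x := (1:ℝ)) (f := atTop (α := ℕ)) |>.sub hEzero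
    simpa using this
  exact hfinal.congr' (hsplit.mono fun n h => h.symm)
end

section
/- Let n ≥ 2, p, q ∈ (0,1), let π be a prior mass function on Θ_n with π(θ) > 0 for all θ, and fix θ ∈ Θ_n. Let B ⊆ Θ_n satisfy P_θ Π(B | X^n) ≥ 1 − β for some β ∈ (0,1), let γ ∈ (0,1), and let D : 𝒳_n → 𝒫(Θ_n) be any map with Π(D(x) | X^n = x) ≥ 1 − γ for all x ∈ 𝒳_n (a credible set of credible level 1 − γ). Then P_θ(B ∩ D(X^n) ≠ ∅) ≥ 1 − β/(1 − γ). -/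
open Finset Real Filter

lemma graphPMF_sum {n : ℕ} (p q : ℝ) (θ : Fin n → Bool) :
    ∑ x : ObsGraph n, graphPMF p q θ x = 1 := by
  unfold graphPMF
  have h := Finset.prod_univ_sum (fun _ : Edge n => (Finset.univ : Finset Bool))
    (fun e b => if b then edgeProb p q θ e else 1 - edgeProb p q θ e)
  rw [Fintype.piFinset_univ] at h
  rw [← h]
  simp

/-- if `B` has expected posterior mass at least `1 − β` and `D(X^n)` is a
credible set of level `1 − γ`, then `P_θ(B ∩ D(X^n) ≠ ∅) ≥ 1 − β/(1 − γ)`. -/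
theorem stmt16 (n : ℕ) (hn : 2 ≤ n) (p q : ℝ) (hp : p ∈ Set.Ioo (0:ℝ) 1)
    (hq : q ∈ Set.Ioo (0:ℝ) 1) (pri : (Fin n → Bool) → ℝ)
    (hpri : ∀ θ ∈ Theta n, 0 < pri θ)
    (θ : Fin n → Bool) (hθ : θ ∈ Theta n)
    (B : Finset (Fin n → Bool)) (hB : B ⊆ Theta n)
    (β γ : ℝ) (hβ : β ∈ Set.Ioo (0:ℝ) 1) (hγ : γ ∈ Set.Ioo (0:ℝ) 1)
    (hpost : 1 - β ≤ expPostMass p q pri θ B)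
    (D : ObsGraph n → Finset (Fin n → Bool)) (hDsub : ∀ x, D x ⊆ Theta n)
    (hD : ∀ x, 1 - γ ≤ postMass p q pri (D x) x) :
    1 - β / (1 - γ)
      ≤ ∑ x ∈ Finset.univ.filter (fun x : ObsGraph n => (B ∩ D x).Nonempty),
          graphPMF p q θ x := by
  have h1γ : (0:ℝ) < 1 - γ := by linarith [hγ.2]
  have hpmfpos : ∀ x : ObsGraph n, 0 < graphPMF p q θ x := fun x => graphPMF_pos hp hq θ x
  have hSpos : ∀ x : ObsGraph n, 0 < ∑ η ∈ Theta n, pri η * graphPMF p q η x := by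
    intro x
    apply Finset.sum_pos' (fun η hη => mul_nonneg (hpri η hη).le (graphPMF_pos hp hq η x).le)
    exact ⟨θ, hθ, mul_pos (hpri θ hθ) (graphPMF_pos hp hq θ x)⟩
  have hnn : ∀ (A : Finset (Fin n → Bool)), A ⊆ Theta n → ∀ x : ObsGraph n,
      0 ≤ ∑ η ∈ A, pri η * graphPMF p q η x := by
    intro A hA x
    exact Finset.sum_nonneg fun η hη =>
      mul_nonneg (hpri η (hA hη)).le (graphPMF_pos hp hq η x).le
  have hpost_nonneg : ∀ x : ObsGraph n, 0 ≤ postMass p q pri B x := fun x =>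
    div_nonneg (hnn B hB x) (hSpos x).le
  have hpost_le_one : ∀ x : ObsGraph n, postMass p q pri B x ≤ 1 := by
    intro x
    unfold postMass
    rw [div_le_one (hSpos x)]
    exact Finset.sum_le_sum_of_subset_of_nonneg hB
      (fun η hη _ => mul_nonneg (hpri η hη).le (graphPMF_pos hp hq η x).le)
  have hkey : ∀ x : ObsGraph n, ¬(B ∩ D x).Nonempty → postMass p q pri B x ≤ γ := by
    intro x hx
    have hdisj : Disjoint B (D x) :=
      Finset.disjoint_iff_inter_eq_empty.2 (Finset.not_nonempty_iff_eq_empty.1 hx)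
    have hsum : postMass p q pri B x + postMass p q pri (D x) x ≤ 1 := by
      unfold postMass
      rw [← add_div, div_le_one (hSpos x), ← Finset.sum_union hdisj]
      exact Finset.sum_le_sum_of_subset_of_nonneg (Finset.union_subset hB (hDsub x))
        (fun η hη _ => mul_nonneg (hpri η hη).le (graphPMF_pos hp hq η x).le)
    linarith [hD x]
  set P := ∑ x ∈ Finset.univ.filter (fun x : ObsGraph n => (B ∩ D x).Nonempty),
      graphPMF p q θ x with hP
  have hsplitpmf :
      P + ∑ x ∈ Finset.univ.filter (fun x : ObsGraph n => ¬(B ∩ D x).Nonempty),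
        graphPMF p q θ x = 1 := by
    rw [hP, Finset.sum_filter_add_sum_filter_not]
    exact graphPMF_sum p q θ
  have hsplit :
      expPostMass p q pri θ B
        = (∑ x ∈ Finset.univ.filter (fun x : ObsGraph n => (B ∩ D x).Nonempty),
            graphPMF p q θ x * postMass p q pri B x)
        + ∑ x ∈ Finset.univ.filter (fun x : ObsGraph n => ¬(B ∩ D x).Nonempty),
            graphPMF p q θ x * postMass p q pri B x := by
    rw [Finset.sum_filter_add_sum_filter_not]
    rfl
  have h1 : (∑ x ∈ Finset.univ.filter (fun x : ObsGraph n => (B ∩ D x).Nonempty),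
      graphPMF p q θ x * postMass p q pri B x) ≤ P := by
    rw [hP]
    apply Finset.sum_le_sum
    intro x _
    calc graphPMF p q θ x * postMass p q pri B x
        ≤ graphPMF p q θ x * 1 := by
          exact mul_le_mul_of_nonneg_left (hpost_le_one x) (hpmfpos x).le
      _ = graphPMF p q θ x := mul_one _
  have h2 : (∑ x ∈ Finset.univ.filter (fun x : ObsGraph n => ¬(B ∩ D x).Nonempty),
      graphPMF p q θ x * postMass p q pri B x) ≤ γ * (1 - P) := by
    have : (∑ x ∈ Finset.univ.filter (fun x : ObsGraph n => ¬(B ∩ D x).Nonempty),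
        graphPMF p q θ x * postMass p q pri B x)
        ≤ ∑ x ∈ Finset.univ.filter (fun x : ObsGraph n => ¬(B ∩ D x).Nonempty),
            graphPMF p q θ x * γ := by
      apply Finset.sum_le_sum
      intro x hx
      exact mul_le_mul_of_nonneg_left (hkey x (Finset.mem_filter.1 hx).2) (hpmfpos x).le
    rw [← Finset.sum_mul] at this
    have hrest : (∑ x ∈ Finset.univ.filter (fun x : ObsGraph n => ¬(B ∩ D x).Nonempty),
        graphPMF p q θ x) = 1 - P := by linarith [hsplitpmf]
    rw [hrest] at this
    linarith [this]
  have hmain : 1 - β ≤ P + γ * (1 - P) := by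
    have := hpost
    rw [hsplit] at this
    linarith
  have hfrac : β / (1 - γ) * (1 - γ) = β := div_mul_cancel₀ β h1γ.ne'
  nlinarith [hmain, hfrac, h1γ]
end

section
/- For every integer n ≥ 1 and every real x ∈ [0,1], the sum Σ_{k=1}^{⌊n/2⌋} C(n,k)·x^{k(n−k)} satisfies Σ_{k=1}^{⌊n/2⌋} C(n,k)·x^{k(n−k)} ≤ (1 + x^{n/2})^n − 1 ≤ n·x^{n/2}·exp(n·x^{n/2}). -/
/-- for `n ≥ 1` and `x ∈ [0,1]`,
`Σ_{k=1}^{⌊n/2⌋} C(n,k) x^{k(n−k)} ≤ (1 + x^{n/2})^n − 1 ≤ n x^{n/2} exp(n x^{n/2})`. -/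
theorem stmt19 (n : ℕ) (hn : 1 ≤ n) (x : ℝ) (hx : x ∈ Set.Icc (0:ℝ) 1) :
    (∑ k ∈ Finset.Icc 1 (n / 2), (n.choose k : ℝ) * x ^ (k * (n - k))
        ≤ (1 + x ^ ((n : ℝ) / 2)) ^ n - 1)
    ∧ (1 + x ^ ((n : ℝ) / 2)) ^ n - 1
        ≤ (n : ℝ) * x ^ ((n : ℝ) / 2) * Real.exp ((n : ℝ) * x ^ ((n : ℝ) / 2)) := by
  obtain ⟨hx0, hx1⟩ := hx
  set y := x ^ ((n : ℝ) / 2) with hy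
  have hy0 : 0 ≤ y := Real.rpow_nonneg hx0 _
  have hy1 : y ≤ 1 := Real.rpow_le_one hx0 hx1 (by positivity)
  have hsum : (1 + y) ^ n - 1 = ∑ k ∈ Finset.Icc 1 n, (n.choose k : ℝ) * y ^ k := by
    have hexp : (1 + y) ^ n = ∑ k ∈ Finset.range (n + 1), (n.choose k : ℝ) * y ^ k := by
      rw [add_comm, add_pow]
      simp [mul_comm]
    have hins : Finset.range (n + 1) = insert 0 (Finset.Icc 1 n) := by
      ext k; simp [Nat.lt_succ_iff]; omega
    rw [hexp, hins, Finset.sum_insert (by simp)]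
    simp
  constructor
  · rw [hsum]
    calc ∑ k ∈ Finset.Icc 1 (n / 2), (n.choose k : ℝ) * x ^ (k * (n - k))
        ≤ ∑ k ∈ Finset.Icc 1 (n / 2), (n.choose k : ℝ) * y ^ k := by
          apply Finset.sum_le_sum
          intro k hk
          simp only [Finset.mem_Icc] at hk
          obtain ⟨hk1, hk2⟩ := hk
          have h2k : 2 * k ≤ n := by omega
          apply mul_le_mul_of_nonneg_left _ (by positivity)
          rcases eq_or_lt_of_le hx0 with h0 | h0
          · have : x ^ (k * (n - k)) = 0 := by
              rw [← h0]; exact zero_pow (Nat.mul_ne_zero (by omega) (by omega))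
            rw [this]; positivity
          · have e1 : x ^ (k * (n - k)) = x ^ ((k * (n - k) : ℕ) : ℝ) :=
              (Real.rpow_natCast x _).symm
            have e2 : y ^ k = x ^ ((n : ℝ) / 2 * k) := by
              rw [hy, ← Real.rpow_natCast y k, ← Real.rpow_mul hx0]
            rw [e1, e2]
            apply Real.rpow_le_rpow_of_exponent_ge h0 hx1
            have hc : ((k * (n - k) : ℕ) : ℝ) = (k : ℝ) * ((n : ℝ) - (k : ℝ)) := by
              push_cast [Nat.cast_sub (by omega : k ≤ n)]; ring
            rw [hc]
            have h2k' : 2 * (k : ℝ) ≤ (n : ℝ) := by exact_mod_cast h2k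
            have hkpos : (0 : ℝ) ≤ (k : ℝ) := by positivity
            nlinarith
      _ ≤ ∑ k ∈ Finset.Icc 1 n, (n.choose k : ℝ) * y ^ k := by
          apply Finset.sum_le_sum_of_subset_of_nonneg
          · apply Finset.Icc_subset_Icc_right; omega
          · intro k _ _; positivity
  · have h1 : (1 + y) ^ n ≤ Real.exp ((n : ℝ) * y) := by
      calc (1 + y) ^ n ≤ (Real.exp y) ^ n := by
            apply pow_le_pow_left₀ (by linarith)
            linarith [Real.add_one_le_exp y]
        _ = Real.exp ((n : ℝ) * y) := by rw [← Real.exp_nat_mul]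
    set t := (n : ℝ) * y with ht
    have ht0 : 0 ≤ t := by positivity
    have h2 : Real.exp t - 1 ≤ t * Real.exp t := by
      have h3 := Real.add_one_le_exp (-t)
      have h4 : Real.exp (-t) * Real.exp t = 1 := by
        rw [← Real.exp_add]; simp
      nlinarith [Real.exp_pos t, mul_le_mul_of_nonneg_right h3 (Real.exp_pos t).le]
    linarith
end
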